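/- For even exponents m_i = 2l_i (i = 1,...,n) with l = ∑ l_i, and Z = R·U^{(n)} as above with R having density f_R(v) ∝ v^{n-1} g(v²), g(t) = t^{N-1} e^{-a t^s}/(1 + e^{-b t^s})^{2r}, one has E(∏_{i=1}^n Z_i^{2l_i}) = [Γ((1/s)(N + n/2 + l - 1)) Φ*_{2r}(-1,(1/s)(N + n/2 + l - 1), a/b)] / [(n/2)^{[l]} b^{l/s} Γ((1/s)(N + n/2 - 1)) Φ*_{2r}(-1,(1/s)(N + n/2 - 1), a/b)] · ∏_{i=1}^n (2l_i)!/(4^{l_i} l_i!), where x^{[l]} = x(x+1)···(x+l-1) is the rising factorial. -/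

import Mathlib

open MeasureTheory Real Set

/-- Generalized Hurwitz-Lerch zeta function, integral representation. -/
noncomputable def PhiInt (v z s a : ℝ) : ℝ :=
  (1 / Real.Gamma s) *
    ∫ t in Ioi (0:ℝ), t ^ (s - 1) * Real.exp (-a * t) / (1 - z * Real.exp (-t)) ^ v

/-- The GL density generator. -/
noncomputable def glGen (N a b s r : ℝ) (t : ℝ) : ℝ :=
  t ^ (N - 1) * Real.exp (-a * t ^ s) / (1 + Real.exp (-b * t ^ s)) ^ (2 * r)

/-- Rising factorial x^{[l]} = x(x+1)⋯(x+l-1). -/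
noncomputable def ascFac (x : ℝ) (l : ℕ) : ℝ := ∏ i ∈ Finset.range l, (x + i)

open RealInnerProductSpace
open scoped NNReal ENNReal

set_option linter.unusedSectionVars false
set_option linter.unusedTactic false
set_option linter.unreachableTactic false
set_option maxHeartbeats 1000000

lemma ascFac_pos {x : ℝ} (hx : 0 < x) (j : ℕ) : 0 < ascFac x j :=
  Finset.prod_pos fun i _ => by positivity

section Sphere

variable {n : ℕ} (ν : Measure (EuclideanSpace ℝ (Fin n))) [IsProbabilityMeasure ν]

lemma sph_sumsq (hsupp : ν {x | ‖x‖ = 1}ᶜ = 0) :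
    ∀ᵐ x ∂ν, ∑ i, (x i)^2 = (1:ℝ) := by
  have hae : ∀ᵐ x ∂ν, ‖x‖ = 1 := by rw [ae_iff]; exact hsupp
  filter_upwards [hae] with x hx
  have := EuclideanSpace.norm_eq x
  rw [hx] at this
  have h2 : Real.sqrt (∑ i, ‖x i‖^2) = 1 := this.symm
  rw [Real.sqrt_eq_one] at h2
  simpa [Real.norm_eq_abs, sq_abs] using h2

lemma sph_meas (k : Fin n → ℕ) :
    Measurable (fun x : EuclideanSpace ℝ (Fin n) => ∏ i, (x i) ^ (k i)) :=
  Finset.measurable_prod _ fun i _ => ((measurable_pi_apply i).comp (WithLp.measurable_ofLp 2 _)).pow_const _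

lemma sph_bound (hsupp : ν {x | ‖x‖ = 1}ᶜ = 0) (k : Fin n → ℕ) :
    ∀ᵐ x ∂ν, |∏ i, (x i) ^ (k i)| ≤ 1 := by
  filter_upwards [sph_sumsq ν hsupp] with x hx
  rw [Finset.abs_prod]
  refine Finset.prod_le_one (fun i _ => abs_nonneg _) (fun i _ => ?_)
  rw [abs_pow]
  refine pow_le_one₀ (abs_nonneg _) ?_
  nlinarith [Finset.single_le_sum (f := fun i => x i ^ 2)
    (fun i _ => sq_nonneg _) (Finset.mem_univ i), sq_nonneg (x i), abs_nonneg (x i), sq_abs (x i)]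

lemma sph_int (hsupp : ν {x | ‖x‖ = 1}ᶜ = 0) (k : Fin n → ℕ) :
    Integrable (fun x : EuclideanSpace ℝ (Fin n) => ∏ i, (x i) ^ (k i)) ν := by
  refine (integrable_const (1:ℝ)).mono' (sph_meas k).aestronglyMeasurable ?_
  filter_upwards [sph_bound ν hsupp k] with x hx
  calc ‖∏ i, (x i) ^ (k i)‖ = |∏ i, (x i) ^ (k i)| := Real.norm_eq_abs _
  _ ≤ 1 := hx

lemma sph_inv (hrot : ∀ O : EuclideanSpace ℝ (Fin n) ≃ₗᵢ[ℝ] EuclideanSpace ℝ (Fin n),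
      Measure.map O ν = ν)
    (O : EuclideanSpace ℝ (Fin n) ≃ₗᵢ[ℝ] EuclideanSpace ℝ (Fin n))
    (f : EuclideanSpace ℝ (Fin n) → ℝ) (hf : Measurable f) :
    ∫ x, f (O x) ∂ν = ∫ x, f x ∂ν := by
  conv_rhs => rw [← hrot O]
  rw [integral_map O.continuous.measurable.aemeasurable hf.aestronglyMeasurable]

lemma sph_rot (hrot : ∀ O : EuclideanSpace ℝ (Fin n) ≃ₗᵢ[ℝ] EuclideanSpace ℝ (Fin n),
      Measure.map O ν = ν) (i0 : Fin n) (m : ℕ) (t : EuclideanSpace ℝ (Fin n)) :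
    ∫ x, (∑ i, t i * x i) ^ m ∂ν = ‖t‖ ^ m * ∫ x, (x i0) ^ m ∂ν := by
  set w : EuclideanSpace ℝ (Fin n) := ‖t‖ • EuclideanSpace.single i0 1 with hw
  have hnorm : ‖t‖ = ‖w‖ := by
    rw [hw, norm_smul, EuclideanSpace.norm_single]
    simp [Real.norm_eq_abs, abs_of_nonneg (norm_nonneg t)]
  set O : EuclideanSpace ℝ (Fin n) ≃ₗᵢ[ℝ] EuclideanSpace ℝ (Fin n) :=
    Submodule.reflection (ℝ ∙ (t - w))ᗮ with hO
  have hOt : O t = w := Submodule.reflection_sub hnorm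
  have key : ∀ x : EuclideanSpace ℝ (Fin n), (∑ i, t i * (O.symm x) i) = ‖t‖ * x i0 := by
    intro x
    have h1 : (∑ i, t i * (O.symm x) i) = ⟪t, O.symm x⟫ := by
      simp [PiLp.inner_apply, RCLike.inner_apply]
      exact Finset.sum_congr rfl fun i _ => mul_comm _ _
    have h2 : ⟪t, O.symm x⟫ = ⟪O t, x⟫ := by
      conv_lhs => rw [← O.inner_map_map t (O.symm x), O.apply_symm_apply]
    rw [h1, h2, hOt, hw, real_inner_smul_left, EuclideanSpace.inner_single_left]
    simp
  have hmeas : Measurable (fun x : EuclideanSpace ℝ (Fin n) => (∑ i, t i * x i) ^ m) := by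
    exact ((Finset.measurable_sum _ fun i _ =>
      ((measurable_pi_apply i).comp (WithLp.measurable_ofLp 2 (Fin n → ℝ))).const_mul (t i)).pow_const m)
  calc ∫ x, (∑ i, t i * x i) ^ m ∂ν
      = ∫ x, (∑ i, t i * (O.symm x) i) ^ m ∂ν := (sph_inv ν hrot O.symm _ hmeas).symm
    _ = ∫ x, ‖t‖ ^ m * (x i0) ^ m ∂ν := by
        congr 1; ext x; rw [key x, mul_pow]
    _ = ‖t‖ ^ m * ∫ x, (x i0) ^ m ∂ν := integral_const_mul _ _

lemma sph_star (hsupp : ν {x | ‖x‖ = 1}ᶜ = 0)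
    (hrot : ∀ O : EuclideanSpace ℝ (Fin n) ≃ₗᵢ[ℝ] EuclideanSpace ℝ (Fin n),
      Measure.map O ν = ν) (i0 : Fin n) (k : Fin n → ℕ) :
    (Nat.multinomial Finset.univ (fun i => 2 * k i) : ℝ) * ∫ x, ∏ i, x i ^ (2 * k i) ∂ν
      = (Nat.multinomial Finset.univ k : ℝ) * ∫ x, (x i0) ^ (2 * ∑ i, k i) ∂ν := by
  classical
  set L := ∑ i, k i with hL
  set c : ℝ := ∫ x, (x i0) ^ (2 * L) ∂ν with hc
  have hid : ∀ t : Fin n → ℝ,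
      ∫ x, (∑ i, t i * x i) ^ (2 * L) ∂ν = (∑ i, (t i)^2) ^ L * c := by
    intro t
    have h := sph_rot ν hrot i0 (2 * L) ((WithLp.equiv 2 (Fin n → ℝ)).symm t)
    simp only [WithLp.equiv_symm_apply, PiLp.toLp_apply] at h
    rw [h, pow_mul]
    congr 2
    rw [EuclideanSpace.norm_eq, Real.sq_sqrt (by positivity)]
    simp [Real.norm_eq_abs, sq_abs, WithLp.equiv_symm_apply, PiLp.toLp_apply]
  set P : MvPolynomial (Fin n) ℝ :=
    ∑ k' ∈ Finset.piAntidiag Finset.univ (2 * L),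
      MvPolynomial.monomial (Finsupp.equivFunOnFinite.symm k')
        ((Nat.multinomial Finset.univ k' : ℝ) * ∫ x, ∏ i, x i ^ k' i ∂ν) with hP
  set Q : MvPolynomial (Fin n) ℝ :=
    ∑ m ∈ Finset.piAntidiag Finset.univ L,
      MvPolynomial.monomial (Finsupp.equivFunOnFinite.symm (fun i => 2 * m i))
        ((Nat.multinomial Finset.univ m : ℝ) * c) with hQ
  have hfin : ∀ (k' : Fin n → ℕ) (t : Fin n → ℝ),
      (Finsupp.equivFunOnFinite.symm k').prod (fun i e => t i ^ e) = ∏ i, t i ^ k' i := by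
    intro k' t
    rw [Finsupp.prod_fintype _ _ (fun i => pow_zero _)]
    rfl
  have hPQ : P = Q := by
    apply MvPolynomial.funext
    intro t
    have evalP : MvPolynomial.eval t P
        = ∑ k' ∈ Finset.piAntidiag Finset.univ (2 * L),
            (Nat.multinomial Finset.univ k' : ℝ) *
              ((∏ i, t i ^ k' i) * ∫ x, ∏ i, x i ^ k' i ∂ν) := by
      rw [hP, map_sum]
      refine Finset.sum_congr rfl fun k' _ => ?_
      rw [MvPolynomial.eval_monomial, hfin]
      ring
    have evalQ : MvPolynomial.eval t Q
        = ∑ m ∈ Finset.piAntidiag Finset.univ L,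
            (Nat.multinomial Finset.univ m : ℝ) * ((∏ i, (t i ^ 2) ^ m i) * c) := by
      rw [hQ, map_sum]
      refine Finset.sum_congr rfl fun m _ => ?_
      rw [MvPolynomial.eval_monomial, hfin]
      rw [show (∏ i, t i ^ (2 * m i)) = ∏ i, (t i ^ 2) ^ m i by
        exact Finset.prod_congr rfl fun i _ => (pow_mul _ _ _)]
      ring
    have hsum : ∫ x, (∑ i, t i * x i) ^ (2 * L) ∂ν
        = ∑ k' ∈ Finset.piAntidiag Finset.univ (2 * L),
            (Nat.multinomial Finset.univ k' : ℝ) *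
              ((∏ i, t i ^ k' i) * ∫ x, ∏ i, x i ^ k' i ∂ν) := by
      have hpt : ∀ x : EuclideanSpace ℝ (Fin n),
          (∑ i, t i * x i) ^ (2 * L)
            = ∑ k' ∈ Finset.piAntidiag Finset.univ (2 * L),
                (Nat.multinomial Finset.univ k' : ℝ) *
                  ((∏ i, t i ^ k' i) * ∏ i, x i ^ k' i) := by
        intro x
        rw [Finset.sum_pow_eq_sum_piAntidiag]
        refine Finset.sum_congr rfl fun k' _ => ?_
        rw [← Finset.prod_mul_distrib]
        simp_rw [mul_pow]
      rw [integral_congr_ae (Filter.Eventually.of_forall hpt)]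
      rw [integral_finset_sum _ (fun k' _ =>
        (((sph_int ν hsupp k').const_mul _).const_mul _))]
      refine Finset.sum_congr rfl fun k' _ => ?_
      rw [integral_const_mul, integral_const_mul]
    rw [evalP, evalQ, ← hsum, hid t, Finset.sum_pow_eq_sum_piAntidiag]
    rw [Finset.sum_mul]
    refine Finset.sum_congr rfl fun m _ => ?_
    ring
  set d : Fin n →₀ ℕ := Finsupp.equivFunOnFinite.symm (fun i => 2 * k i) with hd
  have hmem : (fun i => 2 * k i) ∈ Finset.piAntidiag Finset.univ (2 * L) := by
    rw [Finset.mem_piAntidiag]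
    exact ⟨by rw [← Finset.mul_sum], fun i _ => Finset.mem_univ i⟩
  have hcoeffP : MvPolynomial.coeff d P
      = (Nat.multinomial Finset.univ (fun i => 2 * k i) : ℝ) * ∫ x, ∏ i, x i ^ (2 * k i) ∂ν := by
    rw [hP, MvPolynomial.coeff_sum]
    rw [Finset.sum_eq_single_of_mem _ hmem]
    · rw [MvPolynomial.coeff_monomial, if_pos rfl]
    · intro b _ hb
      rw [MvPolynomial.coeff_monomial, if_neg]
      intro hbd
      exact hb (Finsupp.equivFunOnFinite.symm.injective (hbd.trans hd))
  have hmemk : k ∈ Finset.piAntidiag Finset.univ L := by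
    rw [Finset.mem_piAntidiag]
    exact ⟨rfl, fun i _ => Finset.mem_univ i⟩
  have hcoeffQ : MvPolynomial.coeff d Q = (Nat.multinomial Finset.univ k : ℝ) * c := by
    rw [hQ, MvPolynomial.coeff_sum]
    rw [Finset.sum_eq_single_of_mem _ hmemk]
    · rw [MvPolynomial.coeff_monomial, if_pos hd.symm]
    · intro b _ hb
      rw [MvPolynomial.coeff_monomial, if_neg]
      intro hbd
      apply hb
      have h2 : (fun i => 2 * b i) = (fun i => 2 * k i) :=
        Finsupp.equivFunOnFinite.symm.injective (hbd.trans hd)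
      funext i
      have := congrFun h2 i
      omega
  rw [← hcoeffP, ← hcoeffQ, hPQ]

lemma sph_M (hsupp : ν {x | ‖x‖ = 1}ᶜ = 0)
    (hrot : ∀ O : EuclideanSpace ℝ (Fin n) ≃ₗᵢ[ℝ] EuclideanSpace ℝ (Fin n),
      Measure.map O ν = ν) (i0 : Fin n) (k : Fin n → ℕ) :
    ∫ x, ∏ i, x i ^ (2 * k i) ∂ν
      = (∫ x, (x i0) ^ (2 * ∑ i, k i) ∂ν) * (∑ i, k i).factorial *
          (∏ i, ((2 * k i).factorial : ℝ))
        / ((2 * ∑ i, k i).factorial * ∏ i, ((k i).factorial : ℝ)) := by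
  have star := sph_star ν hsupp hrot i0 k
  have s1 := Nat.multinomial_spec Finset.univ k
  have s2 := Nat.multinomial_spec Finset.univ (fun i => 2 * k i)
  have s1' : (∏ i, ((k i).factorial : ℝ)) * (Nat.multinomial Finset.univ k : ℝ)
      = (((∑ i, k i).factorial : ℕ) : ℝ) := by exact_mod_cast congrArg (Nat.cast : ℕ → ℝ) s1
  have s2' : (∏ i, ((2 * k i).factorial : ℝ)) *
        (Nat.multinomial Finset.univ (fun i => 2 * k i) : ℝ)
      = (((2 * ∑ i, k i).factorial : ℕ) : ℝ) := by
    have hsum : ∑ i, 2 * k i = 2 * ∑ i, k i := by rw [Finset.mul_sum]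
    rw [← hsum]
    exact_mod_cast congrArg (Nat.cast : ℕ → ℝ) s2
  have hfac1 : (0:ℝ) < (((2 * ∑ i, k i).factorial : ℕ) : ℝ) := by
    exact_mod_cast Nat.factorial_pos _
  have hfac2 : (0:ℝ) < ∏ i, ((k i).factorial : ℝ) :=
    Finset.prod_pos fun i _ => by exact_mod_cast Nat.factorial_pos _
  rw [eq_div_iff (by positivity)]
  linear_combination (∏ i, ((2 * k i).factorial : ℝ)) * (∏ i, ((k i).factorial : ℝ)) * star
    - (∫ x, ∏ i, x i ^ (2 * k i) ∂ν) * (∏ i, ((k i).factorial : ℝ)) * s2'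
    + (∫ x, (x i0) ^ (2 * ∑ i, k i) ∂ν) * (∏ i, ((2 * k i).factorial : ℝ)) * s1'

lemma sph_c (hsupp : ν {x | ‖x‖ = 1}ᶜ = 0)
    (hrot : ∀ O : EuclideanSpace ℝ (Fin n) ≃ₗᵢ[ℝ] EuclideanSpace ℝ (Fin n),
      Measure.map O ν = ν)
    (hn : 0 < n) (i0 : Fin n) (j : ℕ) :
    ∫ x, (x i0) ^ (2 * j) ∂ν
      = (2 * j).factorial / (4 ^ j * j.factorial * ascFac ((n : ℝ)/2) j) := by
  have hsq := sph_sumsq ν hsupp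
  induction j with
  | zero => simp [ascFac]
  | succ j ih =>
    classical
    set kf : Fin n → Fin n → ℕ :=
      fun i i' => (if i' = i0 then j else 0) + (if i' = i then 1 else 0) with hkf
    have hksum : ∀ i, ∑ i', kf i i' = j + 1 := by
      intro i
      simp [hkf, Finset.sum_add_distrib, Finset.sum_ite_eq']
    have kfact : ∀ (i : Fin n) (x : EuclideanSpace ℝ (Fin n)),
        ∏ i', x i' ^ (2 * kf i i') = x i0 ^ (2 * j) * x i ^ 2 := by
      intro i x
      have : (fun i' => x i' ^ (2 * kf i i'))
          = fun i' => (if i' = i0 then x i' ^ (2 * j) else 1) *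
              (if i' = i then x i' ^ 2 else 1) := by
        funext i'
        by_cases h1 : i' = i0 <;> by_cases h2 : i' = i <;>
          simp [hkf, h1, h2, mul_add, pow_add]
      rw [show ∏ i', x i' ^ (2 * kf i i') = ∏ i', ((if i' = i0 then x i' ^ (2 * j) else 1) *
              (if i' = i then x i' ^ 2 else 1)) from Finset.prod_congr rfl fun i' _ => by
                rw [congrFun this i']]
      rw [Finset.prod_mul_distrib, Finset.prod_ite_eq', Finset.prod_ite_eq']
      simp
    have hsplit : ∫ x, (x i0) ^ (2 * j) ∂ν
        = ∑ i, ∫ x, (x i0) ^ (2 * j) * (x i) ^ 2 ∂ν := by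
      have h1 : ∫ x, (x i0) ^ (2 * j) ∂ν
          = ∫ x, ∑ i, (x i0) ^ (2 * j) * (x i) ^ 2 ∂ν := by
        apply integral_congr_ae
        filter_upwards [hsq] with x hx
        rw [← Finset.mul_sum, hx, mul_one]
      rw [h1, integral_finset_sum]
      intro i _
      exact (sph_int ν hsupp (fun i' => 2 * kf i i')).congr
        (Filter.Eventually.of_forall fun x => kfact i x)
    set c' : ℝ := ∫ x, (x i0) ^ (2 * (j + 1)) ∂ν with hc'
    have hterm : ∀ i, ∫ x, (x i0) ^ (2 * j) * (x i) ^ 2 ∂ν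
        = c' * (j+1).factorial * (∏ i', ((2 * kf i i').factorial : ℝ))
            / ((2 * (j+1)).factorial * ∏ i', ((kf i i').factorial : ℝ)) := by
      intro i
      rw [← integral_congr_ae (Filter.Eventually.of_forall fun x => kfact i x)]
      rw [sph_M ν hsupp hrot i0 (kf i), hksum i]
    have hprod1 : (∏ i', ((kf i0 i').factorial : ℝ)) = (j+1).factorial := by
      have : ∀ i', ((kf i0 i').factorial : ℝ) = if i' = i0 then ((j+1).factorial : ℝ) else 1 := by
        intro i'
        by_cases h : i' = i0 <;> simp [hkf, h]
      rw [Finset.prod_congr rfl fun i' _ => this i', Finset.prod_ite_eq']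
      simp
    have hprod2 : (∏ i', ((2 * kf i0 i').factorial : ℝ)) = (2*(j+1)).factorial := by
      have : ∀ i', ((2 * kf i0 i').factorial : ℝ)
          = if i' = i0 then ((2*(j+1)).factorial : ℝ) else 1 := by
        intro i'
        by_cases h : i' = i0 <;> simp [hkf, h]
      rw [Finset.prod_congr rfl fun i' _ => this i', Finset.prod_ite_eq']
      simp
    have hprod3 : ∀ i, i ≠ i0 → (∏ i', ((kf i i').factorial : ℝ)) = j.factorial := by
      intro i hi
      have : ∀ i', ((kf i i').factorial : ℝ) = if i' = i0 then (j.factorial : ℝ) else 1 := by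
        intro i'
        by_cases h1 : i' = i0
        · subst h1; simp [hkf, show ¬ (i' = i) from fun h => hi h.symm]
        · by_cases h2 : i' = i
          · subst h2; simp [hkf, h1]
          · simp [hkf, h1, h2]
      rw [Finset.prod_congr rfl fun i' _ => this i', Finset.prod_ite_eq']
      simp
    have hprod4 : ∀ i, i ≠ i0 → (∏ i', ((2 * kf i i').factorial : ℝ))
        = (2*j).factorial * 2 := by
      intro i hi
      have : ∀ i', ((2 * kf i i').factorial : ℝ)
          = (if i' = i0 then ((2*j).factorial : ℝ) else 1) * (if i' = i then 2 else 1) := by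
        intro i'
        by_cases h1 : i' = i0
        · subst h1; simp [hkf, show ¬ (i' = i) from fun h => hi h.symm]
        · by_cases h2 : i' = i
          · subst h2; simp [hkf, h1]
          · simp [hkf, h1, h2]
      rw [Finset.prod_congr rfl fun i' _ => this i', Finset.prod_mul_distrib,
        Finset.prod_ite_eq', Finset.prod_ite_eq']
      simp
    have f1 : (0:ℝ) < (j.factorial : ℝ) := by exact_mod_cast j.factorial_pos
    have f2 : (0:ℝ) < ((j+1).factorial : ℝ) := by exact_mod_cast (j+1).factorial_pos
    have f3 : (0:ℝ) < ((2*j).factorial : ℝ) := by exact_mod_cast (2*j).factorial_pos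
    have f4 : (0:ℝ) < ((2*(j+1)).factorial : ℝ) := by exact_mod_cast (2*(j+1)).factorial_pos
    have g0 : (0:ℝ) < ascFac ((n:ℝ)/2) j := ascFac_pos (by positivity) j
    have hn1 : (1:ℝ) ≤ (n:ℝ) := by exact_mod_cast hn
    set β : ℝ := ((n:ℝ) - 1) * (((j+1).factorial : ℝ) * (((2*j).factorial : ℝ) * 2)
        / (((2*(j+1)).factorial : ℝ) * (j.factorial : ℝ))) with hβ
    have hβ0 : 0 ≤ β := by
      apply mul_nonneg (by linarith)
      positivity
    have hsum2 : ((2*j).factorial : ℝ) / (4 ^ j * (j.factorial : ℝ) * ascFac ((n:ℝ)/2) j)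
        = c' * (1 + β) := by
      rw [← ih, hsplit, ← Finset.add_sum_erase _ _ (Finset.mem_univ i0)]
      rw [hterm i0, hprod1, hprod2]
      rw [Finset.sum_congr rfl (fun i hi => by
        rw [hterm i, hprod3 i (Finset.ne_of_mem_erase hi), hprod4 i (Finset.ne_of_mem_erase hi)])]
      rw [Finset.sum_const, Finset.card_erase_of_mem (Finset.mem_univ i0), Finset.card_univ,
        Fintype.card_fin, nsmul_eq_mul]
      rw [Nat.cast_sub hn, Nat.cast_one]
      rw [hβ]
      field_simp
    have e1 : ((2*(j+1)).factorial : ℝ) = (2*(j:ℝ)+2) * ((2*(j:ℝ)+1) * ((2*j).factorial : ℝ)) := by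
      rw [show 2*(j+1) = (2*j+1)+1 by ring, Nat.factorial_succ, Nat.factorial_succ]
      push_cast; ring
    have e2 : (((j+1)).factorial : ℝ) = ((j:ℝ)+1) * (j.factorial : ℝ) := by
      rw [Nat.factorial_succ]; push_cast; ring
    have e3 : ascFac ((n:ℝ)/2) (j+1) = ascFac ((n:ℝ)/2) j * ((n:ℝ)/2 + j) :=
      Finset.prod_range_succ _ _
    have hkey : ((2*(j+1)).factorial : ℝ)
          / (4 ^ (j+1) * ((j+1).factorial : ℝ) * ascFac ((n:ℝ)/2) (j+1)) * (1 + β)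
        = ((2*j).factorial : ℝ) / (4 ^ j * (j.factorial : ℝ) * ascFac ((n:ℝ)/2) j) := by
      rw [hβ, e3, e1, e2]
      have h4 : (0:ℝ) < 4 ^ j := by positivity
      have hnj : (0:ℝ) < (n:ℝ)/2 + j := by positivity
      field_simp
      ring
    have h1β : (0:ℝ) < 1 + β := by linarith
    have : c' = ((2*(j+1)).factorial : ℝ)
        / (4 ^ (j+1) * ((j+1).factorial : ℝ) * ascFac ((n:ℝ)/2) (j+1)) :=
      mul_right_cancel₀ (ne_of_gt h1β) (hsum2.symm.trans hkey.symm)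
    exact this

lemma sphere_moment (hsupp : ν {x | ‖x‖ = 1}ᶜ = 0)
    (hrot : ∀ O : EuclideanSpace ℝ (Fin n) ≃ₗᵢ[ℝ] EuclideanSpace ℝ (Fin n),
      Measure.map O ν = ν)
    (hn : 0 < n) (l : Fin n → ℕ) :
    ∫ x, ∏ i, (x i) ^ (2 * l i) ∂ν
      = (1 / ascFac ((n:ℝ)/2) (∑ i, l i)) *
          ∏ i, ((2 * l i).factorial : ℝ) / (4 ^ (l i) * (l i).factorial) := by
  have i0 : Fin n := ⟨0, hn⟩
  rw [sph_M ν hsupp hrot i0 l, sph_c ν hsupp hrot hn i0 (∑ i, l i)]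
  set L := ∑ i, l i with hL
  have g0 : (0:ℝ) < ascFac ((n:ℝ)/2) L := ascFac_pos (by positivity) L
  have f1 : (0:ℝ) < (L.factorial : ℝ) := by exact_mod_cast L.factorial_pos
  have f3 : (0:ℝ) < ((2*L).factorial : ℝ) := by exact_mod_cast (2*L).factorial_pos
  have p1 : (0:ℝ) < ∏ i, ((l i).factorial : ℝ) :=
    Finset.prod_pos fun i _ => by exact_mod_cast (l i).factorial_pos
  have p2 : (0:ℝ) < (4:ℝ) ^ L := by positivity
  have hsplit : ∏ i, ((2 * l i).factorial : ℝ) / (4 ^ (l i) * (l i).factorial)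
      = (∏ i, ((2 * l i).factorial : ℝ)) / ((4:ℝ) ^ L * ∏ i, ((l i).factorial : ℝ)) := by
    rw [Finset.prod_div_distrib, Finset.prod_mul_distrib, Finset.prod_pow_eq_pow_sum]
  rw [hsplit]
  field_simp

end Sphere

section Radial

noncomputable def Jint (r c κ : ℝ) : ℝ :=
  ∫ u in Ioi (0:ℝ), u ^ (κ - 1) * Real.exp (-c * u) / (1 + Real.exp (-u)) ^ (2 * r)

lemma Jf_meas (r c κ : ℝ) : Measurable
    (fun u : ℝ => u ^ (κ - 1) * Real.exp (-c * u) / (1 + Real.exp (-u)) ^ (2 * r)) := by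
  fun_prop

lemma Jf_nonneg {r c κ : ℝ} {u : ℝ} (hu : 0 < u) :
    0 ≤ u ^ (κ - 1) * Real.exp (-c * u) / (1 + Real.exp (-u)) ^ (2 * r) := by
  positivity

lemma Jint_integrableOn {r c κ : ℝ} (hr : 0 ≤ r) (hc : 0 < c) (hκ : 0 < κ) :
    IntegrableOn
      (fun u : ℝ => u ^ (κ - 1) * Real.exp (-c * u) / (1 + Real.exp (-u)) ^ (2 * r))
      (Ioi 0) := by
  have hmaj : IntegrableOn (fun u : ℝ => u ^ (κ - 1) * Real.exp (-c * u)) (Ioi 0) := by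
    have h := integrableOn_rpow_mul_exp_neg_mul_rpow
      (show (-1:ℝ) < κ - 1 by linarith) (by norm_num : (0:ℝ) < 1) hc
    refine h.congr_fun (fun x hx => ?_) measurableSet_Ioi
    simp only [Real.rpow_one]
  refine Integrable.mono' hmaj ((Jf_meas r c κ).aestronglyMeasurable) ?_
  filter_upwards [ae_restrict_mem measurableSet_Ioi] with u hu
  rw [Real.norm_eq_abs, abs_of_nonneg (Jf_nonneg hu)]
  have hu' : (0:ℝ) < u := hu
  apply div_le_self
  · exact mul_nonneg (Real.rpow_nonneg hu'.le _) (Real.exp_pos _).le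
  · apply Real.one_le_rpow (by nlinarith [Real.exp_pos (-u)]) (by linarith)

lemma Jint_pos {r c κ : ℝ} (hr : 0 ≤ r) (hc : 0 < c) (hκ : 0 < κ) :
    0 < Jint r c κ := by
  rw [Jint, setIntegral_pos_iff_support_of_nonneg_ae ?h1 (Jint_integrableOn hr hc hκ)]
  case h1 =>
    filter_upwards [ae_restrict_mem measurableSet_Ioi] with u hu
    exact Jf_nonneg hu
  have hsub : Ioi (0:ℝ) ⊆
      (Function.support fun u => u ^ (κ - 1) * rexp (-c * u) / (1 + rexp (-u)) ^ (2 * r))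
        ∩ Ioi 0 := by
    intro u hu
    have hu' : (0:ℝ) < u := hu
    refine ⟨Function.mem_support.2 (ne_of_gt (div_pos (mul_pos (Real.rpow_pos_of_pos hu' _)
      (Real.exp_pos _)) (Real.rpow_pos_of_pos (by nlinarith [Real.exp_pos (-u)]) _))), hu⟩
  calc (0:ENNReal) < volume (Ioi (0:ℝ)) := by simp [Real.volume_Ioi]
    _ ≤ _ := measure_mono hsub

lemma GammaPhi {r c κ : ℝ} (hκ : 0 < κ) :
    Real.Gamma κ * PhiInt (2 * r) (-1) κ c = Jint r c κ := by
  rw [PhiInt, Jint]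
  have he : ∫ t in Ioi (0:ℝ), t ^ (κ - 1) * Real.exp (-c * t) / (1 - (-1) * Real.exp (-t)) ^ (2*r)
      = ∫ u in Ioi (0:ℝ), u ^ (κ - 1) * Real.exp (-c * u) / (1 + Real.exp (-u)) ^ (2 * r) := by
    congr 1
    funext t
    norm_num
  rw [he, ← mul_assoc, mul_one_div, div_self (Real.Gamma_pos_of_pos hκ).ne', one_mul]

lemma Gscale {a b r κ : ℝ} (hb : 0 < b) :
    (∫ w in Ioi (0:ℝ), w ^ (κ - 1) * Real.exp (-a * w) / (1 + Real.exp (-b * w)) ^ (2*r))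
      = b ^ (-κ) * Jint r (a/b) κ := by
  set G : ℝ → ℝ := fun w => w ^ (κ - 1) * Real.exp (-a * w) / (1 + Real.exp (-b * w)) ^ (2*r)
    with hG
  have h := integral_comp_mul_left_Ioi G 0 (inv_pos.mpr hb)
  rw [mul_zero] at h
  have h2 : (∫ x in Ioi (0:ℝ), G (b⁻¹ * x)) = b ^ (-(κ-1)) * Jint r (a/b) κ := by
    rw [Jint, ← integral_const_mul]
    refine setIntegral_congr_fun measurableSet_Ioi (fun u hu => ?_)
    have hu' : (0:ℝ) < u := hu
    rw [hG]
    simp only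
    rw [show b⁻¹ * u = u * b⁻¹ by ring, Real.mul_rpow hu'.le (by positivity),
      show -a * (u * b⁻¹) = -(a/b) * u by first | (field_simp; ring) | field_simp,
      show -b * (u * b⁻¹) = -u by first | (field_simp; ring) | field_simp,
      ← Real.rpow_neg_one b, ← Real.rpow_mul hb.le]
    rw [show (-1:ℝ) * (κ - 1) = -(κ-1) by ring]
    ring
  rw [h2] at h
  have : (b⁻¹)⁻¹ • (∫ x in Ioi (0:ℝ), G x) = b * ∫ x in Ioi (0:ℝ), G x := by
    rw [inv_inv, smul_eq_mul]
  rw [this] at h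
  have hfin : (∫ x in Ioi (0:ℝ), G x) = b⁻¹ * (b ^ (-(κ-1)) * Jint r (a/b) κ) := by
    field_simp at h ⊢
    linarith [h]
  rw [hfin, ← Real.rpow_neg_one b, ← mul_assoc, ← Real.rpow_add hb,
    show (-1 + -(κ-1)) = -κ by ring]

lemma radial_I {N a b s r : ℝ} (hb : 0 < b) (hs : 0 < s) (n : ℕ) (m : ℕ) :
    (∫ v in Ioi (0:ℝ), v ^ (2*m : ℕ) * (v ^ ((n:ℝ) - 1) * glGen N a b s r (v^2)))
      = (1/(2*s)) * (b ^ (-((N + (n:ℝ)/2 + m - 1)/s)) *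
          Jint r (a/b) ((N + (n:ℝ)/2 + m - 1)/s)) := by
  set κ : ℝ := (N + (n:ℝ)/2 + m - 1)/s with hκdef
  set G : ℝ → ℝ := fun w => w ^ (κ - 1) * Real.exp (-a * w) / (1 + Real.exp (-b * w)) ^ (2*r)
    with hG
  have h1 : ∀ v ∈ Ioi (0:ℝ), v ^ (2*m : ℕ) * (v ^ ((n:ℝ) - 1) * glGen N a b s r (v^2))
      = (1/(2*s)) * ((|2*s| * v ^ (2*s - 1)) • G (v ^ (2*s))) := by
    intro v hv
    have hv' : (0:ℝ) < v := hv
    have e2s : ((v^2 : ℝ)) ^ s = v ^ (2*s) := by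
      rw [← Real.rpow_natCast v 2, ← Real.rpow_mul hv'.le]
      norm_num
    have e2N : ((v^2 : ℝ)) ^ (N-1) = v ^ (2*(N-1)) := by
      rw [← Real.rpow_natCast v 2, ← Real.rpow_mul hv'.le]
      norm_num
    have eκ : (v ^ (2*s)) ^ (κ - 1) = v ^ (2*s*(κ-1)) := by
      rw [← Real.rpow_mul hv'.le]
    have enat : (v : ℝ) ^ (2*m : ℕ) = v ^ ((2*m : ℕ) : ℝ) := (Real.rpow_natCast v (2*m)).symm
    rw [glGen, hG]
    simp only [smul_eq_mul]
    rw [e2s, e2N, eκ, enat, abs_of_pos (by linarith : (0:ℝ) < 2*s)]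
    rw [div_eq_mul_inv, div_eq_mul_inv]
    have hexp : ((2*m : ℕ) : ℝ) + (((n:ℝ) - 1) + 2*(N-1)) = (2*s - 1) + 2*s*(κ-1) := by
      rw [hκdef]
      push_cast
      field_simp
      ring
    calc v ^ ((2*m : ℕ) : ℝ) * (v ^ ((n:ℝ) - 1) * (v ^ (2*(N-1)) *
            Real.exp (-a * v ^ (2*s)) * ((1 + Real.exp (-b * v ^ (2*s))) ^ (2*r))⁻¹))
        = v ^ (((2*m : ℕ) : ℝ) + (((n:ℝ) - 1) + 2*(N-1))) *
            Real.exp (-a * v ^ (2*s)) * ((1 + Real.exp (-b * v ^ (2*s))) ^ (2*r))⁻¹ := by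
          rw [Real.rpow_add hv', Real.rpow_add hv']
          ring
      _ = v ^ ((2*s - 1) + 2*s*(κ-1)) *
            Real.exp (-a * v ^ (2*s)) * ((1 + Real.exp (-b * v ^ (2*s))) ^ (2*r))⁻¹ := by
          rw [hexp]
      _ = 1 / (2*s) * (2*s * v ^ (2*s - 1) * (v ^ (2*s*(κ-1)) *
            Real.exp (-a * v ^ (2*s)) * ((1 + Real.exp (-b * v ^ (2*s))) ^ (2*r))⁻¹)) := by
          rw [Real.rpow_add hv']
          field_simp
  rw [setIntegral_congr_fun measurableSet_Ioi h1, integral_const_mul,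
    integral_comp_rpow_Ioi G (by positivity : (2*s) ≠ 0)]
  rw [show (∫ y in Ioi (0:ℝ), G y) = b ^ (-κ) * Jint r (a/b) κ from Gscale hb]

lemma radial_moment {n : ℕ} {N a b s r : ℝ}
    (ha : 0 < a) (hb : 0 < b) (hs : 0 < s) (hr : 0 ≤ r) (hNn : 2 < 2 * N + n) (L : ℕ)
    (μR : Measure ℝ)
    (hμR : μR = volume.withDensity fun v =>
      ENNReal.ofReal (Set.indicator (Ioi (0:ℝ))
        (fun v => v ^ ((n : ℝ) - 1) * glGen N a b s r (v ^ 2) /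
          ∫ t in Ioi (0:ℝ), t ^ ((n : ℝ) - 1) * glGen N a b s r (t ^ 2)) v)) :
    ∫ v, v ^ (2 * L : ℕ) ∂μR
      = Jint r (a/b) ((N + (n:ℝ)/2 + L - 1)/s)
        / (b ^ ((L:ℝ)/s) * Jint r (a/b) ((N + (n:ℝ)/2 - 1)/s)) := by
  set κL : ℝ := (N + (n:ℝ)/2 + L - 1)/s with hκL
  set κ0 : ℝ := (N + (n:ℝ)/2 - 1)/s with hκ0
  have hκ0pos : 0 < κ0 := by
    rw [hκ0]
    apply div_pos _ hs
    have : (2:ℝ) < 2*N + n := hNn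
    linarith
  have hκLpos : 0 < κL := by
    rw [hκL]
    apply div_pos _ hs
    have h' : (2:ℝ) < 2*N + n := hNn
    have h'' : (0:ℝ) ≤ L := Nat.cast_nonneg L
    linarith
  set D : ℝ := ∫ t in Ioi (0:ℝ), t ^ ((n : ℝ) - 1) * glGen N a b s r (t ^ 2) with hD
  have hI0 : D = (1/(2*s)) * (b ^ (-κ0) * Jint r (a/b) κ0) := by
    have h0 := radial_I (N := N) (a := a) (r := r) hb hs n 0
    have e0 : (∫ v in Ioi (0:ℝ), v ^ (2*0 : ℕ) * (v ^ ((n:ℝ) - 1) * glGen N a b s r (v^2)))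
        = D := by
      refine setIntegral_congr_fun measurableSet_Ioi (fun v hv => ?_)
      norm_num
    rw [e0] at h0
    rw [h0]
    norm_num [hκ0]
  have hIL := radial_I (N := N) (a := a) (r := r) hb hs n L
  have hglm : Measurable (glGen N a b s r) := by
    unfold glGen
    fun_prop
  have hnum_meas : Measurable (fun v : ℝ => v ^ ((n : ℝ) - 1) * glGen N a b s r (v ^ 2) / D) := by
    fun_prop
  have hD0 : 0 < D := by
    rw [hI0]
    have := Jint_pos (r := r) (c := a/b) hr (div_pos ha hb) hκ0pos
    have hbp : (0:ℝ) < b ^ (-κ0) := Real.rpow_pos_of_pos hb _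
    positivity
  have hnum_nonneg : ∀ v ∈ Ioi (0:ℝ), 0 ≤ v ^ ((n : ℝ) - 1) * glGen N a b s r (v ^ 2) / D := by
    intro v hv
    have hv' : (0:ℝ) < v := hv
    have h1 : 0 ≤ glGen N a b s r (v ^ 2) := by
      rw [glGen]
      have : (0:ℝ) < v^2 := by positivity
      positivity
    have h2 : 0 ≤ v ^ ((n : ℝ) - 1) := Real.rpow_nonneg hv'.le _
    positivity
  set f : ℝ → ℝ := Set.indicator (Ioi (0:ℝ))
    (fun v => v ^ ((n : ℝ) - 1) * glGen N a b s r (v ^ 2) / D) with hf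
  have hf_meas : Measurable f := hnum_meas.indicator measurableSet_Ioi
  have hf_nonneg : ∀ v, 0 ≤ f v := by
    intro v
    rw [hf]
    by_cases hv : v ∈ Ioi (0:ℝ)
    · rw [Set.indicator_of_mem hv]
      exact hnum_nonneg v hv
    · rw [Set.indicator_of_notMem hv]
  have step1 : ∫ v, v ^ (2 * L : ℕ) ∂μR = ∫ v, f v * v ^ (2 * L : ℕ) := by
    rw [hμR]
    have hcoe : (fun v => ENNReal.ofReal (f v))
        = (fun v => ((Real.toNNReal (f v) : ℝ≥0) : ℝ≥0∞)) := rfl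
    rw [hcoe, integral_withDensity_eq_integral_smul (f := fun v => Real.toNNReal (f v))
      (measurable_real_toNNReal.comp hf_meas) (fun v => v ^ (2*L:ℕ))]
    congr 1
    funext v
    rw [NNReal.smul_def, Real.coe_toNNReal _ (hf_nonneg v), smul_eq_mul]
  have step2 : ∫ v, f v * v ^ (2 * L : ℕ)
      = ∫ v in Ioi (0:ℝ), v ^ (2 * L : ℕ) * (v ^ ((n : ℝ) - 1) * glGen N a b s r (v ^ 2)) / D := by
    rw [← integral_indicator measurableSet_Ioi]
    congr 1
    funext v
    by_cases hv : v ∈ Ioi (0:ℝ)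
    · rw [Set.indicator_of_mem hv, hf, Set.indicator_of_mem hv]
      ring
    · rw [Set.indicator_of_notMem hv, hf, Set.indicator_of_notMem hv, zero_mul]
  rw [step1, step2, integral_div, hIL, hI0]
  have hJ0 : 0 < Jint r (a/b) κ0 := Jint_pos hr (div_pos ha hb) hκ0pos
  have hb1 : (0:ℝ) < b ^ (-κL) := Real.rpow_pos_of_pos hb _
  have hb2 : (0:ℝ) < b ^ (-κ0) := Real.rpow_pos_of_pos hb _
  have hb3 : (0:ℝ) < b ^ ((L:ℝ)/s) := Real.rpow_pos_of_pos hb _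
  have hbb : b ^ (-κL) * b ^ ((L:ℝ)/s) = b ^ (-κ0) := by
    rw [← Real.rpow_add hb]
    congr 1
    rw [hκL, hκ0]
    field_simp
    ring
  have hJL : 0 < Jint r (a/b) κL := Jint_pos hr (div_pos ha hb) hκLpos
  rw [div_eq_div_iff (by positivity) (by positivity)]
  linear_combination (1/(2*s)) * Jint r (a/b) κL * Jint r (a/b) κ0 * hbb

end Radial

/-- Even product moments of Z = R·U, U uniform on the unit sphere, R with density
∝ v^{n-1} g(v²). -/
theorem even_product_moment (n : ℕ) (hn : 0 < n) (N a b s r : ℝ)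
    (ha : 0 < a) (hb : 0 < b) (hs : 0 < s) (hr : 0 ≤ r) (hNn : 2 < 2 * N + n)
    (l : Fin n → ℕ)
    (ν : Measure (EuclideanSpace ℝ (Fin n))) [IsProbabilityMeasure ν]
    (hsupp : ν {x | ‖x‖ = 1}ᶜ = 0)
    (hrot : ∀ O : EuclideanSpace ℝ (Fin n) ≃ₗᵢ[ℝ] EuclideanSpace ℝ (Fin n),
      Measure.map O ν = ν)
    (μR : Measure ℝ)
    (hμR : μR = volume.withDensity fun v =>
      ENNReal.ofReal (Set.indicator (Ioi (0:ℝ))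
        (fun v => v ^ ((n : ℝ) - 1) * glGen N a b s r (v ^ 2) /
          ∫ t in Ioi (0:ℝ), t ^ ((n : ℝ) - 1) * glGen N a b s r (t ^ 2)) v)) :
    ∫ p : ℝ × EuclideanSpace ℝ (Fin n), ∏ i, (p.1 * p.2 i) ^ (2 * l i)
        ∂(μR.prod ν)
      = Real.Gamma ((1 / s) * (N + (n : ℝ) / 2 + (∑ i, l i) - 1)) *
          PhiInt (2 * r) (-1) ((1 / s) * (N + (n : ℝ) / 2 + (∑ i, l i) - 1)) (a / b) /
          (ascFac ((n : ℝ) / 2) (∑ i, l i) * b ^ ((∑ i, (l i : ℝ)) / s) *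
            Real.Gamma ((1 / s) * (N + (n : ℝ) / 2 - 1)) *
            PhiInt (2 * r) (-1) ((1 / s) * (N + (n : ℝ) / 2 - 1)) (a / b)) *
          ∏ i, ((2 * l i).factorial : ℝ) / (4 ^ (l i) * (l i).factorial) := by
  subst hμR
  have hfac : ∀ p : ℝ × EuclideanSpace ℝ (Fin n),
      ∏ i, (p.1 * p.2 i) ^ (2 * l i)
        = p.1 ^ (2 * ∑ i, l i) * ∏ i, (p.2 i) ^ (2 * l i) := by
    intro p
    rw [Finset.mul_sum, ← Finset.prod_pow_eq_pow_sum, ← Finset.prod_mul_distrib]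
    exact Finset.prod_congr rfl fun i _ => (mul_pow _ _ _)
  rw [integral_congr_ae (Filter.Eventually.of_forall hfac)]
  rw [integral_prod_mul (f := fun v : ℝ => v ^ (2 * ∑ i, l i))
    (g := fun y : EuclideanSpace ℝ (Fin n) => ∏ i, (y i) ^ (2 * l i))]
  rw [radial_moment ha hb hs hr hNn (∑ i, l i) _ rfl]
  rw [sphere_moment ν hsupp hrot hn l]
  have hκ0pos : (0:ℝ) < (N + (n:ℝ)/2 - 1)/s := by
    apply div_pos _ hs
    have : (2:ℝ) < 2*N + n := hNn
    linarith
  have hκLpos : (0:ℝ) < (N + (n:ℝ)/2 + (∑ i, l i) - 1)/s := by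
    apply div_pos _ hs
    have h' : (2:ℝ) < 2*N + n := hNn
    have h'' : (0:ℝ) ≤ ((∑ i, l i : ℕ) : ℝ) := Nat.cast_nonneg _
    linarith
  rw [show (1/s) * (N + (n : ℝ)/2 + ((∑ i, l i : ℕ) : ℝ) - 1)
      = (N + (n:ℝ)/2 + (∑ i, l i) - 1)/s by ring]
  rw [show (1/s) * (N + (n : ℝ)/2 - 1) = (N + (n:ℝ)/2 - 1)/s by ring]
  rw [show (∑ i, ((l i : ℕ) : ℝ)) = (((∑ i, l i : ℕ)) : ℝ) by push_cast; rfl]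
  rw [← GammaPhi (r := r) (c := a/b) hκLpos, ← GammaPhi (r := r) (c := a/b) hκ0pos]
  ring
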